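/- Let G be a countable group. If G admits a group homomorphism with nontrivial image into the group Homeo̰₊(ℝ, 0) of germs at 0 of orientation-preserving homeomorphisms of ℝ fixing 0, then G admits a group homomorphism with nontrivial image into Homeo₊(ℝ). -/

import Mathlib

open Filter Topology Set

def HomeoPlusReal : Subgroup (Equiv.Perm ℝ) where
  carrier := {f | Continuous f ∧ Continuous f.symm ∧ StrictMono f}
  one_mem' := by
    refine ⟨continuous_id, ?_, fun a b h => h⟩
    exact continuous_id
  mul_mem' := by
    rintro a b ⟨ha1, ha2, ha3⟩ ⟨hb1, hb2, hb3⟩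
    refine ⟨?_, ?_, ?_⟩
    · simpa [Equiv.Perm.coe_mul] using ha1.comp hb1
    · have : Continuous (⇑b.symm ∘ ⇑a.symm) := hb2.comp ha2
      simpa [Equiv.Perm.mul_def, Equiv.symm_trans_apply, Function.comp] using this
    · intro x y h
      simpa [Equiv.Perm.coe_mul] using ha3 (hb3 h)
  inv_mem' := by
    rintro a ⟨ha1, ha2, ha3⟩
    refine ⟨by simpa using ha2, by exact ha1, ?_⟩
    intro x y h
    have h2 := ha3.lt_iff_lt (a := a.symm x) (b := a.symm y)
    simp only [Equiv.apply_symm_apply] at h2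
    simpa using h2.mp h

/-- Data representing a local orientation-preserving homeomorphism of `ℝ`
defined on an open neighborhood `U` of `0`, fixing `0`, together with a local
inverse `G` defined on the open image neighborhood `V`. -/
structure LocalHomeoAtZero where
  F : ℝ → ℝ
  G : ℝ → ℝ
  U : Set ℝ
  V : Set ℝ
  isOpen_U : IsOpen U
  isOpen_V : IsOpen V
  mem_U : (0 : ℝ) ∈ U
  mem_V : (0 : ℝ) ∈ V
  contF : ContinuousOn F U
  contG : ContinuousOn G V
  mapsF : Set.MapsTo F U V
  mapsG : Set.MapsTo G V U
  leftInv : ∀ x ∈ U, G (F x) = x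
  rightInv : ∀ x ∈ V, F (G x) = x
  mono : StrictMonoOn F U
  fixes : F 0 = 0

namespace LocalHomeoAtZero

/-- Two local homeomorphisms are identified when they agree on some
neighborhood of `0`, i.e. they have the same germ at `0`. -/
instance setoid : Setoid LocalHomeoAtZero where
  r d e := d.F =ᶠ[nhds (0 : ℝ)] e.F
  iseqv := ⟨fun _ => Filter.EventuallyEq.refl _ _,
    fun h => h.symm, fun h h' => h.trans h'⟩

lemma G_fixes (d : LocalHomeoAtZero) : d.G 0 = 0 := by
  have h := d.leftInv 0 d.mem_U
  rw [d.fixes] at h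
  exact h

/-- The identity element. -/
def one : LocalHomeoAtZero where
  F := id
  G := id
  U := Set.univ
  V := Set.univ
  isOpen_U := isOpen_univ
  isOpen_V := isOpen_univ
  mem_U := trivial
  mem_V := trivial
  contF := continuousOn_id
  contG := continuousOn_id
  mapsF := fun x _ => trivial
  mapsG := fun x _ => trivial
  leftInv := fun x _ => rfl
  rightInv := fun x _ => rfl
  mono := fun x _ y _ h => h
  fixes := rfl

/-- Composition of local homeomorphisms. -/
def comp (d e : LocalHomeoAtZero) : LocalHomeoAtZero where
  F := d.F ∘ e.F
  G := e.G ∘ d.G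
  U := e.U ∩ e.F ⁻¹' d.U
  V := d.V ∩ d.G ⁻¹' e.V
  isOpen_U := e.contF.isOpen_inter_preimage e.isOpen_U d.isOpen_U
  isOpen_V := d.contG.isOpen_inter_preimage d.isOpen_V e.isOpen_V
  mem_U := ⟨e.mem_U, by simp only [Set.mem_preimage, e.fixes]; exact d.mem_U⟩
  mem_V := ⟨d.mem_V, by simp only [Set.mem_preimage, d.G_fixes]; exact e.mem_V⟩
  contF := d.contF.comp (e.contF.mono Set.inter_subset_left) (fun x hx => hx.2)
  contG := e.contG.comp (d.contG.mono Set.inter_subset_left) (fun x hx => hx.2)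
  mapsF := by
    rintro x ⟨hx1, hx2⟩
    refine ⟨d.mapsF hx2, ?_⟩
    simp only [Set.mem_preimage, Function.comp_apply]
    rw [d.leftInv _ hx2]
    exact e.mapsF hx1
  mapsG := by
    rintro y ⟨hy1, hy2⟩
    refine ⟨e.mapsG hy2, ?_⟩
    simp only [Set.mem_preimage, Function.comp_apply]
    rw [e.rightInv _ hy2]
    exact d.mapsG hy1
  leftInv := by
    rintro x ⟨hx1, hx2⟩
    simp only [Function.comp_apply]
    rw [d.leftInv _ hx2, e.leftInv _ hx1]
  rightInv := by
    rintro y ⟨hy1, hy2⟩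
    simp only [Function.comp_apply]
    rw [e.rightInv _ hy2, d.rightInv _ hy1]
  mono := by
    rintro x ⟨hx1, hx2⟩ y ⟨hy1, hy2⟩ hxy
    exact d.mono hx2 hy2 (e.mono hx1 hy1 hxy)
  fixes := by simp only [Function.comp_apply, e.fixes, d.fixes]

/-- Inverse of a local homeomorphism. -/
def inv (d : LocalHomeoAtZero) : LocalHomeoAtZero where
  F := d.G
  G := d.F
  U := d.V
  V := d.U
  isOpen_U := d.isOpen_V
  isOpen_V := d.isOpen_U
  mem_U := d.mem_V
  mem_V := d.mem_U
  contF := d.contG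
  contG := d.contF
  mapsF := d.mapsG
  mapsG := d.mapsF
  leftInv := d.rightInv
  rightInv := d.leftInv
  mono := by
    intro x hx y hy hxy
    rcases lt_trichotomy (d.G x) (d.G y) with h | h | h
    · exact h
    · exfalso
      have : x = y := by
        rw [← d.rightInv x hx, ← d.rightInv y hy, h]
      exact absurd this (ne_of_lt hxy)
    · exfalso
      have := d.mono (d.mapsG hy) (d.mapsG hx) h
      rw [d.rightInv x hx, d.rightInv y hy] at this
      exact absurd hxy (not_lt.mpr this.le)
  fixes := d.G_fixes

lemma comp_sound {d₁ e₁ d₂ e₂ : LocalHomeoAtZero} (h₁ : d₁ ≈ e₁) (h₂ : d₂ ≈ e₂) :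
    comp d₁ d₂ ≈ comp e₁ e₂ := by
  have hc : ContinuousAt d₂.F 0 := d₂.contF.continuousAt (d₂.isOpen_U.mem_nhds d₂.mem_U)
  have ht : Tendsto d₂.F (nhds (0 : ℝ)) (nhds (0 : ℝ)) := by
    have := hc.tendsto
    rwa [d₂.fixes] at this
  have hA : d₁.F ∘ d₂.F =ᶠ[nhds (0 : ℝ)] e₁.F ∘ d₂.F := h₁.comp_tendsto ht
  have hB : e₁.F ∘ d₂.F =ᶠ[nhds (0 : ℝ)] e₁.F ∘ e₂.F := h₂.fun_comp e₁.F
  exact hA.trans hB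

lemma inv_sound {d e : LocalHomeoAtZero} (h : d ≈ e) : inv d ≈ inv e := by
  obtain ⟨s, hs, hseq⟩ := Filter.eventuallyEq_iff_exists_mem.mp h
  obtain ⟨W, hWs, hWopen, hW0⟩ := mem_nhds_iff.mp hs
  set A : Set ℝ := d.U ∩ e.U ∩ W with hA
  have hAopen : IsOpen A := (d.isOpen_U.inter e.isOpen_U).inter hWopen
  have hA0 : (0 : ℝ) ∈ A := ⟨⟨d.mem_U, e.mem_U⟩, hW0⟩
  set B : Set ℝ := d.V ∩ d.G ⁻¹' A with hB
  have hBopen : IsOpen B := d.contG.isOpen_inter_preimage d.isOpen_V hAopen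
  have hB0 : (0 : ℝ) ∈ B := ⟨d.mem_V, by simp only [Set.mem_preimage, d.G_fixes]; exact hA0⟩
  apply Filter.eventuallyEq_of_mem (hBopen.mem_nhds hB0)
  rintro y ⟨hy1, hy2⟩
  simp only [Set.mem_preimage] at hy2
  obtain ⟨⟨hxU, hxU'⟩, hxW⟩ := hy2
  show d.G y = e.G y
  have h1 : d.F (d.G y) = y := d.rightInv y hy1
  have h2 : e.F (d.G y) = y := by rw [← hseq (hWs hxW)]; exact h1
  calc d.G y = e.G (e.F (d.G y)) := (e.leftInv _ hxU').symm
    _ = e.G y := by rw [h2]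

end LocalHomeoAtZero

/-- The group of germs at `0` of orientation-preserving local homeomorphisms of `ℝ`
fixing `0`, under composition of germs. -/
def GermHomeoPlus : Type := Quotient LocalHomeoAtZero.setoid

namespace GermHomeoPlus

instance : Group GermHomeoPlus where
  mul := Quotient.map₂ LocalHomeoAtZero.comp
    (fun _ _ h₁ _ _ h₂ => LocalHomeoAtZero.comp_sound h₁ h₂)
  one := ⟦LocalHomeoAtZero.one⟧
  inv := Quotient.map LocalHomeoAtZero.inv (fun _ _ h => LocalHomeoAtZero.inv_sound h)
  mul_assoc a b c := by
    induction a using Quotient.ind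
    induction b using Quotient.ind
    induction c using Quotient.ind
    exact Quotient.sound (Filter.EventuallyEq.refl _ _)
  one_mul a := by
    induction a using Quotient.ind
    exact Quotient.sound (Filter.EventuallyEq.refl _ _)
  mul_one a := by
    induction a using Quotient.ind
    exact Quotient.sound (Filter.EventuallyEq.refl _ _)
  inv_mul_cancel a := by
    induction a using Quotient.ind
    rename_i d
    apply Quotient.sound
    apply Filter.eventuallyEq_of_mem (d.isOpen_U.mem_nhds d.mem_U)
    intro x hx
    exact d.leftInv x hx

end GermHomeoPlus


-- ===== aux =====
namespace GermRealize
open LocalHomeoAtZero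

def mk (a : LocalHomeoAtZero) : GermHomeoPlus := Quotient.mk LocalHomeoAtZero.setoid a

lemma mul_mk (a b : LocalHomeoAtZero) : mk a * mk b = mk (a.comp b) := rfl

lemma mk_exact {a b : LocalHomeoAtZero} (h : mk a = mk b) : a.F =ᶠ[nhds (0:ℝ)] b.F :=
  Quotient.exact h

noncomputable def rep (x : GermHomeoPlus) : LocalHomeoAtZero := Quotient.out x

lemma rep_spec (x : GermHomeoPlus) : mk (rep x) = x := Quotient.out_eq x

lemma rep_mul (x y : GermHomeoPlus) :
    (rep (x * y)).F =ᶠ[nhds (0:ℝ)] (rep x).F ∘ (rep y).F := by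
  have : mk (rep (x*y)) = mk ((rep x).comp (rep y)) := by
    rw [rep_spec, ← mul_mk, rep_spec, rep_spec]
  exact mk_exact this

end GermRealize

namespace GermRealize

/-- shrinking radii -/
noncomputable def aseq (n : ℕ) : ℝ := ((n : ℝ) + 1)⁻¹

lemma aseq_pos (n : ℕ) : 0 < aseq n := by unfold aseq; positivity

lemma aseq_anti : ∀ {m n : ℕ}, m ≤ n → aseq n ≤ aseq m := by
  intro m n h
  unfold aseq
  have h1 : (0:ℝ) < (m:ℝ) + 1 := by positivity
  have h2 : (m:ℝ) + 1 ≤ (n:ℝ) + 1 := by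
    have : (m:ℝ) ≤ n := Nat.cast_le.mpr h
    linarith
  exact inv_anti₀ h1 h2

lemma aseq_tendsto : Tendsto aseq atTop (nhds (0:ℝ)) := by
  have := tendsto_one_div_add_atTop_nhds_zero_nat (𝕜 := ℝ)
  exact Tendsto.congr (fun n => by simp [aseq]) this

/-- the annuli -/
def Jset (n : ℕ) : Set ℝ := {x | aseq (n+1) < |x| ∧ |x| ≤ aseq n}

lemma eventually_J_subset {W : Set ℝ} (hW : W ∈ nhds (0:ℝ)) :
    ∀ᶠ n in cofinite, Jset n ⊆ W := by
  rw [Nat.cofinite_eq_atTop]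
  obtain ⟨ε, hε, hball⟩ := Metric.mem_nhds_iff.mp hW
  filter_upwards [aseq_tendsto.eventually (gt_mem_nhds hε)] with n hn x hx
  apply hball
  simp only [Metric.mem_ball, Real.dist_eq, sub_zero]
  exact lt_of_le_of_lt hx.2 hn

lemma exists_mem_J {x : ℝ} (hx : x ≠ 0) {N : ℕ} (hxa : |x| ≤ aseq N) :
    ∃ n, N ≤ n ∧ x ∈ Jset n := by
  have hpos : 0 < |x| := abs_pos.mpr hx
  have hex : ∃ m, aseq m < |x| := by
    obtain ⟨m, hm⟩ := (aseq_tendsto.eventually (gt_mem_nhds hpos)).exists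
    · exact ⟨m, hm⟩
  classical
  let M := Nat.find hex
  have hM : aseq M < |x| := Nat.find_spec hex
  have hMpos : N < M := by
    by_contra hc
    push_neg at hc
    exact absurd hM (not_lt.mpr (hxa.trans (aseq_anti hc)))
  refine ⟨M - 1, by omega, ?_, ?_⟩
  · have : M - 1 + 1 = M := by omega
    rw [this]; exact hM
  · have hlt : M - 1 < M := by omega
    have := Nat.find_min hex hlt
    push_neg at this
    exact this

end GermRealize

namespace GermRealize

noncomputable def qk (k : ℕ) : ℚ := (Denumerable.eqv ℚ).symm k

lemma qk_surj : Function.Surjective qk := (Denumerable.eqv ℚ).symm.surjective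

variable {G : Type*} [Group G]

noncomputable def dd (φ : G →* GermHomeoPlus) (g : G) : LocalHomeoAtZero := rep (φ g)

open Classical in
noncomputable def Θ (φ : G →* GermHomeoPlus) (g : G) (n : ℕ) : Lex (ℕ → ℝ) :=
  toLex (fun k => if (qk k : ℝ) ∈ Jset n then (dd φ g).F (qk k) else 0)

open Classical in
lemma Θ_apply (φ : G →* GermHomeoPlus) (g : G) (n k : ℕ) :
    ofLex (Θ φ g n) k = if (qk k : ℝ) ∈ Jset n then (dd φ g).F (qk k) else 0 := rfl

lemma lex_transfer {u u' v v' : Lex (ℕ → ℝ)}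
    (hlt : ∀ k, ofLex u k < ofLex u' k ↔ ofLex v k < ofLex v' k)
    (heq : ∀ k, ofLex u k = ofLex u' k ↔ ofLex v k = ofLex v' k) :
    (u < u' ↔ v < v') ∧ (u = u' ↔ v = v') := by
  refine ⟨⟨?_, ?_⟩, ⟨?_, ?_⟩⟩
  · rintro ⟨i, hj, hi⟩
    exact ⟨i, fun j hji => (heq j).1 (hj j hji), (hlt i).1 hi⟩
  · rintro ⟨i, hj, hi⟩
    exact ⟨i, fun j hji => (heq j).2 (hj j hji), (hlt i).2 hi⟩
  · intro hh
    exact ofLex.injective (funext fun k => (heq k).1 (congrFun (congrArg ofLex hh) k))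
  · intro hh
    exact ofLex.injective (funext fun k => (heq k).2 (congrFun (congrArg ofLex hh) k))

lemma eventually_comp (φ : G →* GermHomeoPlus) (g h : G) :
    ∀ᶠ n in cofinite, ∀ x ∈ Jset n, (dd φ (g*h)).F x = (dd φ g).F ((dd φ h).F x) := by
  have hgm : (dd φ (g*h)).F =ᶠ[nhds (0:ℝ)] (dd φ g).F ∘ (dd φ h).F := by
    have := rep_mul (φ g) (φ h)
    simpa [dd, map_mul] using this
  obtain ⟨W, hW, hWeq⟩ := Filter.eventuallyEq_iff_exists_mem.mp hgm
  filter_upwards [eventually_J_subset hW] with n hn x hx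
  exact hWeq (hn hx)

lemma eventually_maps (φ : G →* GermHomeoPlus) (g h : G) :
    ∀ᶠ n in cofinite, ∀ x ∈ Jset n, x ∈ (dd φ h).U ∧ (dd φ h).F x ∈ (dd φ g).U := by
  have hU : (dd φ h).U ∈ nhds (0:ℝ) := (dd φ h).isOpen_U.mem_nhds (dd φ h).mem_U
  have hcont : ContinuousAt (dd φ h).F 0 := (dd φ h).contF.continuousAt hU
  have htend : Tendsto (dd φ h).F (nhds 0) (nhds (0:ℝ)) := by
    have := hcont.tendsto
    rwa [(dd φ h).fixes] at this
  have hpre : (dd φ h).F ⁻¹' (dd φ g).U ∈ nhds (0:ℝ) :=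
    htend ((dd φ g).isOpen_U.mem_nhds (dd φ g).mem_U)
  filter_upwards [eventually_J_subset (Filter.inter_mem hU hpre)] with n hn x hx
  exact ⟨(hn hx).1, (hn hx).2⟩

lemma theta_transfer (φ : G →* GermHomeoPlus) (g h h' : G) :
    ∀ᶠ n in cofinite,
      (Θ φ (g*h) n < Θ φ (g*h') n ↔ Θ φ h n < Θ φ h' n) ∧
      (Θ φ (g*h) n = Θ φ (g*h') n ↔ Θ φ h n = Θ φ h' n) := by
  filter_upwards [eventually_comp φ g h, eventually_comp φ g h',
    eventually_maps φ g h, eventually_maps φ g h'] with n e1 e2 e3 e4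
  have hlt : ∀ k, ofLex (Θ φ (g*h) n) k < ofLex (Θ φ (g*h') n) k ↔
      ofLex (Θ φ h n) k < ofLex (Θ φ h' n) k := by
    intro k
    by_cases hk : (qk k : ℝ) ∈ Jset n
    · simp only [Θ_apply, if_pos hk]
      rw [e1 _ hk, e2 _ hk]
      exact (dd φ g).mono.lt_iff_lt (e3 _ hk).2 (e4 _ hk).2
    · simp only [Θ_apply, if_neg hk]
  have heq : ∀ k, ofLex (Θ φ (g*h) n) k = ofLex (Θ φ (g*h') n) k ↔
      ofLex (Θ φ h n) k = ofLex (Θ φ h' n) k := by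
    intro k
    by_cases hk : (qk k : ℝ) ∈ Jset n
    · simp only [Θ_apply, if_pos hk]
      rw [e1 _ hk, e2 _ hk]
      exact ((dd φ g).mono.injOn).eq_iff (e3 _ hk).2 (e4 _ hk).2
    · simp only [Θ_apply, if_neg hk]
  exact lex_transfer hlt heq

end GermRealize

namespace GermRealize

variable {G : Type*} [Group G]

noncomputable def Tmap (φ : G →* GermHomeoPlus) (U : Ultrafilter ℕ) (g : G) :
    Germ (U : Filter ℕ) (Lex (ℕ → ℝ)) := (Θ φ g : Germ (U : Filter ℕ) (Lex (ℕ → ℝ)))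

lemma Tmap_def (φ : G →* GermHomeoPlus) (U : Ultrafilter ℕ) (g : G) :
    Tmap φ U g = (Θ φ g : Germ (U : Filter ℕ) (Lex (ℕ → ℝ))) := rfl

lemma Tmap_eq_of (φ : G →* GermHomeoPlus) {U : Ultrafilter ℕ}
    (hcof : (U : Filter ℕ) ≤ cofinite) (g : G) {h h' : G}
    (hhh : Tmap φ U h = Tmap φ U h') : Tmap φ U (g*h) = Tmap φ U (g*h') := by
  rw [Tmap_def, Tmap_def, Filter.Germ.coe_eq] at hhh ⊢
  filter_upwards [hhh, hcof (theta_transfer φ g h h')] with n h1 h2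
  exact h2.2.mpr h1

lemma Tmap_lt_of (φ : G →* GermHomeoPlus) {U : Ultrafilter ℕ}
    (hcof : (U : Filter ℕ) ≤ cofinite) (g : G) {h h' : G}
    (hhh : Tmap φ U h < Tmap φ U h') : Tmap φ U (g*h) < Tmap φ U (g*h') := by
  rw [Tmap_def, Tmap_def, Filter.Germ.coe_lt] at hhh ⊢
  filter_upwards [hhh, hcof (theta_transfer φ g h h')] with n h1 h2
  exact h2.1.mpr h1

noncomputable def crep (φ : G →* GermHomeoPlus) (U : Ultrafilter ℕ)
    (x : ↥(Set.range (Tmap φ U))) : G := x.2.choose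

lemma crep_spec (φ : G →* GermHomeoPlus) (U : Ultrafilter ℕ)
    (x : ↥(Set.range (Tmap φ U))) : Tmap φ U (crep φ U x) = x.1 := x.2.choose_spec

noncomputable def sig (φ : G →* GermHomeoPlus) (U : Ultrafilter ℕ) (g : G)
    (x : ↥(Set.range (Tmap φ U))) : ↥(Set.range (Tmap φ U)) :=
  ⟨Tmap φ U (g * crep φ U x), Set.mem_range_self _⟩

lemma sig_val (φ : G →* GermHomeoPlus) {U : Ultrafilter ℕ}
    (hcof : (U : Filter ℕ) ≤ cofinite) (g : G) {h : G}
    (x : ↥(Set.range (Tmap φ U))) (hx : x.1 = Tmap φ U h) :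
    (sig φ U g x).1 = Tmap φ U (g * h) := by
  apply Tmap_eq_of φ hcof g
  rw [crep_spec, hx]

lemma sig_one (φ : G →* GermHomeoPlus) {U : Ultrafilter ℕ}
    (hcof : (U : Filter ℕ) ≤ cofinite) (x : ↥(Set.range (Tmap φ U))) :
    sig φ U 1 x = x := by
  apply Subtype.ext
  show Tmap φ U (1 * crep φ U x) = x.1
  rw [one_mul, crep_spec]

lemma sig_mul (φ : G →* GermHomeoPlus) {U : Ultrafilter ℕ}
    (hcof : (U : Filter ℕ) ≤ cofinite) (g g' : G) (x : ↥(Set.range (Tmap φ U))) :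
    sig φ U (g*g') x = sig φ U g (sig φ U g' x) := by
  apply Subtype.ext
  have h1 : (sig φ U g (sig φ U g' x)).1 = Tmap φ U (g * (g' * crep φ U x)) :=
    sig_val φ hcof g _ rfl
  show Tmap φ U ((g*g') * crep φ U x) = _
  rw [h1, mul_assoc]

lemma sig_lt_iff (φ : G →* GermHomeoPlus) {U : Ultrafilter ℕ}
    (hcof : (U : Filter ℕ) ≤ cofinite) (g : G) {x y : ↥(Set.range (Tmap φ U))} :
    sig φ U g x < sig φ U g y ↔ x < y := by
  rw [Subtype.mk_lt_mk, ← Subtype.coe_lt_coe, ← crep_spec φ U x, ← crep_spec φ U y]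
  constructor
  · intro hlt
    have := Tmap_lt_of φ hcof g⁻¹ hlt
    simpa only [inv_mul_cancel_left] using this
  · exact Tmap_lt_of φ hcof g

/-- The order automorphism of the orbit induced by `g`. -/
noncomputable def sigIso (φ : G →* GermHomeoPlus) {U : Ultrafilter ℕ}
    (hcof : (U : Filter ℕ) ≤ cofinite) (g : G) :
    ↥(Set.range (Tmap φ U)) ≃o ↥(Set.range (Tmap φ U)) where
  toFun := sig φ U g
  invFun := sig φ U g⁻¹
  left_inv x := by rw [← sig_mul φ hcof, inv_mul_cancel, sig_one φ hcof]
  right_inv x := by rw [← sig_mul φ hcof, mul_inv_cancel, sig_one φ hcof]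
  map_rel_iff' := by
    intro a b
    show sig φ U g a ≤ sig φ U g b ↔ a ≤ b
    rw [← not_lt, ← not_lt, sig_lt_iff φ hcof g]

end GermRealize

namespace GermRealize

variable {G : Type*} [Group G]

lemma denselyLex (A : Type*) [Preorder A] : DenselyOrdered (A ×ₗ ℚ) := by
  constructor
  intro a b hab
  rcases Prod.Lex.lt_iff.mp hab with h | ⟨h1, h2⟩
  · refine ⟨toLex ((ofLex a).1, (ofLex a).2 + 1), ?_, ?_⟩
    · exact Prod.Lex.lt_iff.mpr (Or.inr ⟨rfl, lt_add_one _⟩)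
    · exact Prod.Lex.lt_iff.mpr (Or.inl h)
  · obtain ⟨c, hc1, hc2⟩ := exists_between h2
    refine ⟨toLex ((ofLex a).1, c), ?_, ?_⟩
    · exact Prod.Lex.lt_iff.mpr (Or.inr ⟨rfl, hc1⟩)
    · exact Prod.Lex.lt_iff.mpr (Or.inr ⟨h1, hc2⟩)

lemma countableLex (A : Type*) [Countable A] : Countable (A ×ₗ ℚ) :=
  Countable.of_equiv (A × ℚ) toLex

/-- The induced order automorphism of `Orb ×ₗ ℚ`. -/
noncomputable def tauIso (φ : G →* GermHomeoPlus) {U : Ultrafilter ℕ}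
    (hcof : (U : Filter ℕ) ≤ cofinite) (g : G) :
    (↥(Set.range (Tmap φ U)) ×ₗ ℚ) ≃o (↥(Set.range (Tmap φ U)) ×ₗ ℚ) where
  toFun p := toLex (sigIso φ hcof g (ofLex p).1, (ofLex p).2)
  invFun p := toLex ((sigIso φ hcof g).symm (ofLex p).1, (ofLex p).2)
  left_inv p := by
    simp only [ofLex_toLex, OrderIso.symm_apply_apply]
    rfl
  right_inv p := by
    simp only [ofLex_toLex, OrderIso.apply_symm_apply]
    rfl
  map_rel_iff' := by
    intro a b
    show toLex (sigIso φ hcof g (ofLex a).1, (ofLex a).2)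
        ≤ toLex (sigIso φ hcof g (ofLex b).1, (ofLex b).2) ↔ a ≤ b
    rw [Prod.Lex.le_iff]
    refine Iff.trans ?_ Prod.Lex.le_iff.symm
    simp only [ofLex_toLex, OrderIso.lt_iff_lt, EmbeddingLike.apply_eq_iff_eq]

lemma tauIso_mul (φ : G →* GermHomeoPlus) {U : Ultrafilter ℕ}
    (hcof : (U : Filter ℕ) ≤ cofinite) (g g' : G) (p) :
    tauIso φ hcof (g * g') p = tauIso φ hcof g (tauIso φ hcof g' p) := by
  show toLex (sig φ U (g*g') (ofLex p).1, (ofLex p).2)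
      = toLex (sig φ U g (sig φ U g' (ofLex p).1), (ofLex p).2)
  rw [sig_mul φ hcof]

lemma tauIso_apply (φ : G →* GermHomeoPlus) {U : Ultrafilter ℕ}
    (hcof : (U : Filter ℕ) ≤ cofinite) (g : G) (p) :
    tauIso φ hcof g p = toLex (sig φ U g (ofLex p).1, (ofLex p).2) := rfl

end GermRealize

namespace GermRealize

/-! ### Extension of order automorphisms of `ℚ` to `ℝ` -/

noncomputable def extR (f : ℚ → ℚ) : ℝ → ℝ :=
  fun x => sSup ((fun q : ℚ => (f q : ℝ)) '' {q : ℚ | (q:ℝ) < x})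

lemma extR_set_nonempty (f : ℚ → ℚ) (x : ℝ) :
    ((fun q : ℚ => (f q : ℝ)) '' {q : ℚ | (q:ℝ) < x}).Nonempty := by
  obtain ⟨q, hq⟩ := exists_rat_lt x
  exact ⟨f q, ⟨q, hq, rfl⟩⟩

lemma extR_set_bdd {f : ℚ → ℚ} (hf : StrictMono f) (x : ℝ) :
    BddAbove ((fun q : ℚ => (f q : ℝ)) '' {q : ℚ | (q:ℝ) < x}) := by
  obtain ⟨p, hp⟩ := exists_rat_gt x
  refine ⟨(f p : ℝ), ?_⟩
  rintro b ⟨q, hq, rfl⟩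
  have h2 : q < p := by exact_mod_cast lt_trans hq hp
  show (f q : ℝ) ≤ (f p : ℝ)
  exact_mod_cast (hf h2).le

lemma rat_lt_extR {f : ℚ → ℚ} (hf : StrictMono f) {q : ℚ} {x : ℝ} (h : (q:ℝ) < x) :
    (f q : ℝ) < extR f x := by
  obtain ⟨r, hqr, hrx⟩ := exists_rat_btwn h
  have h1 : q < r := by exact_mod_cast hqr
  have h2 : (f r : ℝ) ≤ extR f x := le_csSup (extR_set_bdd hf x) ⟨r, hrx, rfl⟩
  exact lt_of_lt_of_le (by exact_mod_cast hf h1) h2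

lemma extR_le_rat {f : ℚ → ℚ} (hf : StrictMono f) {q : ℚ} {x : ℝ} (h : x ≤ (q:ℝ)) :
    extR f x ≤ (f q : ℝ) := by
  apply csSup_le (extR_set_nonempty f x)
  rintro b ⟨r, hr, rfl⟩
  have h2 : r < q := by exact_mod_cast lt_of_lt_of_le hr h
  show (f r : ℝ) ≤ (f q : ℝ)
  exact_mod_cast (hf h2).le

lemma extR_strictMono {f : ℚ → ℚ} (hf : StrictMono f) : StrictMono (extR f) := by
  intro x y hxy
  obtain ⟨q, hxq, hqy⟩ := exists_rat_btwn hxy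
  obtain ⟨r, hqr, hry⟩ := exists_rat_btwn hqy
  calc extR f x ≤ (f q : ℝ) := extR_le_rat hf hxq.le
    _ < (f r : ℝ) := by exact_mod_cast hf (show q < r by exact_mod_cast hqr)
    _ < extR f y := rat_lt_extR hf hry

lemma extR_comp {f g : ℚ → ℚ} (hf : StrictMono f) (hg : StrictMono g) (x : ℝ) :
    extR f (extR g x) = extR (f ∘ g) x := by
  apply le_antisymm
  · apply csSup_le (extR_set_nonempty f _)
    rintro b ⟨q, hq, rfl⟩
    obtain ⟨b', ⟨r, hrx, rfl⟩, hqb'⟩ := exists_lt_of_lt_csSup (extR_set_nonempty g x) hq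
    have h1 : q < g r := by
      have : (q:ℝ) < ((g r : ℚ) : ℝ) := hqb'
      exact_mod_cast this
    have h2 : (f (g r) : ℝ) ≤ extR (f ∘ g) x :=
      le_csSup (extR_set_bdd (hf.comp hg) x) ⟨r, hrx, rfl⟩
    refine le_trans ?_ h2
    show (f q : ℝ) ≤ (f (g r) : ℝ)
    exact_mod_cast (hf h1).le
  · apply csSup_le (extR_set_nonempty (f ∘ g) x)
    rintro b ⟨r, hrx, rfl⟩
    exact (rat_lt_extR hf (rat_lt_extR hg hrx)).le

lemma extR_id (x : ℝ) : extR (id : ℚ → ℚ) x = x := by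
  apply le_antisymm
  · apply csSup_le (extR_set_nonempty _ x)
    rintro b ⟨r, hr, rfl⟩
    exact hr.le
  · by_contra hc
    push_neg at hc
    obtain ⟨s, hs1, hs2⟩ := exists_rat_btwn hc
    have := rat_lt_extR strictMono_id hs2
    simp only [id] at this
    exact absurd (lt_trans this hs1) (lt_irrefl _)

lemma extR_rat {f : ℚ → ℚ} (hf : StrictMono f) (hs : Function.Surjective f) (p : ℚ) :
    extR f (p : ℝ) = (f p : ℝ) := by
  apply le_antisymm
  · exact extR_le_rat hf le_rfl
  · by_contra hc
    push_neg at hc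
    obtain ⟨s, hs1, hs2⟩ := exists_rat_btwn hc
    obtain ⟨r, rfl⟩ := hs s
    have hrp : r < p := hf.lt_iff_lt.mp (by exact_mod_cast hs2)
    have := rat_lt_extR hf (by exact_mod_cast hrp : (r:ℝ) < (p:ℝ))
    exact absurd (lt_trans this hs1) (lt_irrefl _)

end GermRealize

namespace GermRealize

noncomputable def permExt (u : ℚ ≃o ℚ) : Equiv.Perm ℝ where
  toFun := extR ⇑u
  invFun := extR ⇑u.symm
  left_inv x := by
    rw [extR_comp u.symm.strictMono u.strictMono]
    have h : (⇑u.symm ∘ ⇑u) = (id : ℚ → ℚ) := funext fun q => u.symm_apply_apply q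
    rw [h, extR_id]
  right_inv x := by
    rw [extR_comp u.strictMono u.symm.strictMono]
    have h : (⇑u ∘ ⇑u.symm) = (id : ℚ → ℚ) := funext fun q => u.apply_symm_apply q
    rw [h, extR_id]

lemma permExt_surj (u : ℚ ≃o ℚ) : Function.Surjective (extR ⇑u) :=
  fun y => ⟨extR ⇑u.symm y, (permExt u).right_inv y⟩

lemma permExt_mem (u : ℚ ≃o ℚ) : permExt u ∈ HomeoPlusReal := by
  have hs : StrictMono (extR ⇑u) := extR_strictMono u.strictMono
  have hs' : StrictMono (extR ⇑u.symm) := extR_strictMono u.symm.strictMono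
  have hc : Continuous (extR ⇑u) := by
    have := (StrictMono.orderIsoOfSurjective _ hs (permExt_surj u)).continuous
    rwa [StrictMono.coe_orderIsoOfSurjective] at this
  have hc' : Continuous (extR ⇑u.symm) := by
    have := (StrictMono.orderIsoOfSurjective _ hs' (permExt_surj u.symm)).continuous
    rwa [StrictMono.coe_orderIsoOfSurjective] at this
  exact ⟨hc, hc', hs⟩

end GermRealize

namespace GermRealize

variable {G : Type*} [Group G]

lemma tset_infinite (φ : G →* GermHomeoPlus) {g₀ : G} (hg₀ : φ g₀ ≠ 1) :
    {n : ℕ | ∃ k, (qk k : ℝ) ∈ Jset n ∧ (dd φ g₀).F (qk k) ≠ (dd φ 1).F (qk k)}.Infinite := by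
  have key : ∀ N : ℕ, ∃ n, N ≤ n ∧
      ∃ k, (qk k : ℝ) ∈ Jset n ∧ (dd φ g₀).F (qk k) ≠ (dd φ 1).F (qk k) := by
    intro N
    have hne : ¬ ((dd φ g₀).F =ᶠ[nhds (0:ℝ)] (dd φ 1).F) := by
      intro hh
      apply hg₀
      have h1 : φ g₀ = mk (dd φ g₀) := (rep_spec _).symm
      have h2 : mk (dd φ g₀) = mk (dd φ 1) := Quotient.sound hh
      rw [h1, h2]
      show mk (rep (φ 1)) = 1
      rw [rep_spec, map_one]
    have hW : Metric.ball (0:ℝ) (aseq N) ∩ (dd φ g₀).U ∩ (dd φ 1).U ∈ nhds (0:ℝ) := by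
      refine Filter.inter_mem (Filter.inter_mem ?_ ?_) ?_
      · exact Metric.ball_mem_nhds 0 (aseq_pos N)
      · exact (dd φ g₀).isOpen_U.mem_nhds (dd φ g₀).mem_U
      · exact (dd φ 1).isOpen_U.mem_nhds (dd φ 1).mem_U
    have hfreq : ∃ᶠ x in nhds (0:ℝ), (dd φ g₀).F x ≠ (dd φ 1).F x :=
      Filter.not_eventually.mp hne
    obtain ⟨x, hxne, hxW⟩ :=
      (hfreq.and_eventually (hW : ∀ᶠ x in nhds (0:ℝ),
        x ∈ Metric.ball (0:ℝ) (aseq N) ∩ (dd φ g₀).U ∩ (dd φ 1).U)).exists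
    have hx0 : x ≠ 0 := by
      intro h
      apply hxne
      rw [h, (dd φ g₀).fixes, (dd φ 1).fixes]
    have hc1 : ContinuousAt (dd φ g₀).F x :=
      (dd φ g₀).contF.continuousAt ((dd φ g₀).isOpen_U.mem_nhds hxW.1.2)
    have hc2 : ContinuousAt (dd φ 1).F x :=
      (dd φ 1).contF.continuousAt ((dd φ 1).isOpen_U.mem_nhds hxW.2)
    have hev : ∀ᶠ y in nhds x, (dd φ g₀).F y ≠ (dd φ 1).F y := by
      have hsub : ContinuousAt (fun y => (dd φ g₀).F y - (dd φ 1).F y) x := hc1.sub hc2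
      have h3 := hsub.eventually_ne (sub_ne_zero.mpr hxne)
      filter_upwards [h3] with y hy
      exact sub_ne_zero.mp hy
    have hball : ∀ᶠ y in nhds x, y ∈ Metric.ball (0:ℝ) (aseq N) :=
      Metric.isOpen_ball.mem_nhds hxW.1.1
    have hne0 : ∀ᶠ y in nhds x, y ≠ 0 := by
      have h4 : {(0:ℝ)}ᶜ ∈ nhds x := isOpen_compl_singleton.mem_nhds (by simpa using hx0)
      filter_upwards [h4] with y hy using hy
    have hbig := hev.and (hball.and hne0)
    obtain ⟨O, hOsub, hOopen, hxO⟩ := mem_nhds_iff.mp hbig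
    obtain ⟨p, hpO⟩ :=
      (Rat.denseRange_cast (𝕜 := ℝ)).exists_mem_open hOopen ⟨x, hxO⟩
    obtain ⟨k, rfl⟩ := qk_surj p
    have hy := hOsub hpO
    have habs : |((qk k : ℚ) : ℝ)| ≤ aseq N := by
      have := hy.2.1
      rw [Metric.mem_ball, Real.dist_eq, sub_zero] at this
      exact this.le
    obtain ⟨n, hnN, hnJ⟩ := exists_mem_J hy.2.2 habs
    exact ⟨n, hnN, k, hnJ, hy.1⟩
  apply Set.infinite_of_not_bddAbove
  rintro ⟨b, hb⟩
  obtain ⟨n, hn, hk⟩ := key (b+1)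
  have := hb hk
  omega

end GermRealize

open GermRealize in
/-- If a countable group `G` admits a homomorphism with nontrivial image into
the group `Homeo̰₊(ℝ, 0)` of germs at `0` of orientation-preserving
homeomorphisms of `ℝ` fixing `0`, then it admits a homomorphism with nontrivial
image into `Homeo₊(ℝ)`. -/
theorem exists_nontrivial_hom_homeoPlus_of_germ {G : Type*} [Group G] [Countable G]
    (h : ∃ φ : G →* GermHomeoPlus, ∃ g : G, φ g ≠ 1) :
    ∃ ψ : G →* HomeoPlusReal, ∃ g : G, ψ g ≠ 1 := by
  classical
  obtain ⟨φ, g₀, hg₀⟩ := h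
  set Tset := {n : ℕ | ∃ k, (qk k : ℝ) ∈ Jset n ∧
    (dd φ g₀).F (qk k) ≠ (dd φ 1).F (qk k)} with hTsetdef
  have hTinf : Tset.Infinite := tset_infinite φ hg₀
  haveI hNeBot : (Filter.cofinite ⊓ 𝓟 Tset).NeBot := hTinf.cofinite_inf_principal_neBot
  set U := Ultrafilter.of (Filter.cofinite ⊓ 𝓟 Tset) with hUdef
  have hUle : (U : Filter ℕ) ≤ Filter.cofinite ⊓ 𝓟 Tset := Ultrafilter.of_le _
  have hcof : (U : Filter ℕ) ≤ Filter.cofinite := hUle.trans inf_le_left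
  have hT : Tset ∈ (U : Filter ℕ) :=
    hUle (Filter.mem_inf_of_right (Filter.mem_principal_self Tset))
  have hT0 : Tmap φ U g₀ ≠ Tmap φ U 1 := by
    intro hEq
    rw [Tmap_def, Tmap_def, Filter.Germ.coe_eq] at hEq
    have hmem : {n | Θ φ g₀ n = Θ φ 1 n} ∩ Tset ∈ (U : Filter ℕ) :=
      Filter.inter_mem hEq hT
    obtain ⟨n, hn1, hn2⟩ := Filter.nonempty_of_mem hmem
    obtain ⟨k, hk1, hk2⟩ := hn2
    apply hk2
    have hck := congrFun (congrArg ofLex hn1) k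
    rw [Θ_apply, Θ_apply, if_pos hk1, if_pos hk1] at hck
    exact hck
  haveI : Countable ↥(Set.range (Tmap φ U)) := (Set.countable_range _).to_subtype
  haveI := denselyLex ↥(Set.range (Tmap φ U))
  haveI := countableLex ↥(Set.range (Tmap φ U))
  haveI : Nonempty (↥(Set.range (Tmap φ U)) ×ₗ ℚ) :=
    ⟨toLex (⟨Tmap φ U 1, Set.mem_range_self 1⟩, 0)⟩
  obtain ⟨e⟩ := Order.iso_of_countable_dense (↥(Set.range (Tmap φ U)) ×ₗ ℚ) ℚ
  set uq : G → (ℚ ≃o ℚ) := fun g => (e.symm.trans (tauIso φ hcof g)).trans e with huqdef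
  have uq_apply : ∀ (g : G) (q : ℚ), uq g q = e (tauIso φ hcof g (e.symm q)) :=
    fun g q => rfl
  have uq_comp : ∀ g g' : G, ⇑(uq (g * g')) = ⇑(uq g) ∘ ⇑(uq g') := by
    intro g g'
    funext q
    show e (tauIso φ hcof (g*g') (e.symm q))
        = e (tauIso φ hcof g (e.symm (e (tauIso φ hcof g' (e.symm q)))))
    rw [e.symm_apply_apply, tauIso_mul φ hcof]
  refine ⟨MonoidHom.mk' (fun g => ⟨permExt (uq g), permExt_mem _⟩) ?_, g₀, ?_⟩
  · intro g g'
    apply Subtype.ext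
    simp only [Subgroup.coe_mul]
    apply Equiv.ext
    intro x
    rw [Equiv.Perm.mul_apply]
    show extR ⇑(uq (g*g')) x = extR ⇑(uq g) (extR ⇑(uq g') x)
    rw [extR_comp (uq g).strictMono (uq g').strictMono, uq_comp]
  · intro hone
    have h1 : permExt (uq g₀) = 1 := congrArg Subtype.val hone
    have h2 : ∀ p : ℚ, uq g₀ p = p := by
      intro p
      have h3 : extR ⇑(uq g₀) (p:ℝ) = (p:ℝ) := by
        have := Equiv.ext_iff.mp h1 (p:ℝ)
        exact this
      rw [extR_rat (uq g₀).strictMono (uq g₀).surjective] at h3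
      exact_mod_cast h3
    have h4 : tauIso φ hcof g₀ (toLex (⟨Tmap φ U 1, Set.mem_range_self 1⟩, (0:ℚ)))
        = toLex (⟨Tmap φ U 1, Set.mem_range_self 1⟩, (0:ℚ)) := by
      have h5 := h2 (e (toLex (⟨Tmap φ U 1, Set.mem_range_self 1⟩, (0:ℚ))))
      rw [uq_apply, e.symm_apply_apply] at h5
      exact e.injective h5
    rw [tauIso_apply] at h4
    have h6 : sig φ U g₀ ⟨Tmap φ U 1, Set.mem_range_self 1⟩
        = ⟨Tmap φ U 1, Set.mem_range_self 1⟩ := by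
      have := congrArg (fun z => (ofLex z).1) h4
      simpa using this
    have h8 : (sig φ U g₀ ⟨Tmap φ U 1, Set.mem_range_self 1⟩).1 = Tmap φ U (g₀ * 1) :=
      sig_val φ hcof g₀ _ rfl
    rw [h6, mul_one] at h8
    exact hT0 h8.symm
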